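/- (Recipe theorem) Let Q be a function assigning to each matroid M a polynomial Q_M(x,y,a,b) such that: Q is multiplicative over direct sums with Q of the empty matroid equal to 1; if e is a coloop of M then Q_M = x·Q_{M\e}; if e is a loop of M then Q_M = y·Q_{M/e}; and if e is neither a loop nor a coloop then Q_M = a·Q_{M\e} + b·Q_{M/e}. Then for every matroid M, Q_M(x,y,a,b) = a^{n(M)} b^{r(M)} T_M(x/b, y/a), where r(M) is the rank, n(M) = |E| − r(M) is the nullity, and T_M is the Tutte polynomial (here a, b are invertible elements of the coefficient field). -/

import Mathlib

open Matroid Set Finset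

variable {α : Type*}

/-- Deletion `M \ D`: restriction of `M` to `M.E \ D`. -/
def mDelete (M : Matroid α) (D : Set α) : Matroid α := M ↾ (M.E \ D)

/-- Contraction `M / C := (M* \ C)*`. -/
def mContract (M : Matroid α) (C : Set α) : Matroid α := (mDelete M✶ C)✶

/-- Rank of a subset: maximal cardinality of an independent subset. -/
noncomputable def mRk (M : Matroid α) (A : Set α) : ℕ :=
  sSup {n : ℕ | ∃ I, M.Indep I ∧ I ⊆ A ∧ I.ncard = n}

/-- Rank of a matroid. -/
noncomputable def mRank (M : Matroid α) : ℕ := mRk M M.E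

/-- Nullity of a matroid. -/
noncomputable def mNullity (M : Matroid α) : ℕ := M.E.ncard - mRank M

/-- `e` is a loop: `{e}` is a circuit, i.e. `e` is in the ground set and `{e}` is dependent. -/
def mIsLoop (M : Matroid α) (e : α) : Prop := e ∈ M.E ∧ ¬ M.Indep {e}

/-- `e` is a coloop: `e` lies in every basis. -/
def mIsColoop (M : Matroid α) (e : α) : Prop := ∀ B, M.IsBase B → e ∈ B


variable {M : Matroid α} {A B D I J : Set α} {e : α}

lemma basis'_ncard_eq (h1 : M.IsBasis' I A) (h2 : M.IsBasis' J A) : I.ncard = J.ncard :=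
  (isBase_restrict_iff'.2 h1).ncard_eq_ncard_of_isBase (isBase_restrict_iff'.2 h2)

lemma mRk_eq_ncard_of_basis' (hE : M.E.Finite) (h : M.IsBasis' I A) : mRk M A = I.ncard := by
  apply IsGreatest.csSup_eq
  refine ⟨⟨I, h.indep, h.subset, rfl⟩, ?_⟩
  rintro n ⟨J, hJ, hJA, rfl⟩
  obtain ⟨I', hI', hJI'⟩ := hJ.subset_isBasis'_of_subset hJA
  rw [basis'_ncard_eq h hI']
  exact ncard_le_ncard hJI' (hE.subset hI'.indep.subset_ground)

lemma indep_ncard_le_mRk (hE : M.E.Finite) (hI : M.Indep I) (hIA : I ⊆ A) :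
    I.ncard ≤ mRk M A := by
  obtain ⟨I', hI', hJI'⟩ := hI.subset_isBasis'_of_subset hIA
  rw [mRk_eq_ncard_of_basis' hE hI']
  exact ncard_le_ncard hJI' (hE.subset hI'.indep.subset_ground)

lemma mRk_mono (hE : M.E.Finite) (hAB : A ⊆ B) : mRk M A ≤ mRk M B := by
  obtain ⟨I, hI⟩ := M.exists_isBasis' A
  rw [mRk_eq_ncard_of_basis' hE hI]
  exact indep_ncard_le_mRk hE hI.indep (hI.subset.trans hAB)

lemma mRk_le_ncard (hE : M.E.Finite) (hA : A.Finite) : mRk M A ≤ A.ncard := by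
  obtain ⟨I, hI⟩ := M.exists_isBasis' A
  rw [mRk_eq_ncard_of_basis' hE hI]
  exact ncard_le_ncard hI.subset hA

lemma base_ncard (hE : M.E.Finite) (hB : M.IsBase B) : mRk M M.E = B.ncard :=
  mRk_eq_ncard_of_basis' hE hB.isBasis_ground.isBasis'

lemma indep_ncard_le_base (hE : M.E.Finite) (hI : M.Indep I) (hB : M.IsBase B) :
    I.ncard ≤ B.ncard := by
  obtain ⟨B', hB', hIB'⟩ := hI.exists_isBase_superset
  rw [← hB'.ncard_eq_ncard_of_isBase hB]
  exact ncard_le_ncard hIB' (hE.subset hB'.subset_ground)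

lemma mRk_insert_le (hE : M.E.Finite) : mRk M (insert e A) ≤ mRk M A + 1 := by
  obtain ⟨I, hI⟩ := M.exists_isBasis' (insert e A)
  rw [mRk_eq_ncard_of_basis' hE hI]
  have hfin : I.Finite := hE.subset hI.indep.subset_ground
  have h1 : I \ {e} ⊆ A := by
    rintro x ⟨hx, hxe⟩
    rcases hI.subset hx with h | h
    · exact absurd h hxe
    · exact h
  have h2 : (I \ {e}).ncard ≤ mRk M A :=
    indep_ncard_le_mRk hE (hI.indep.subset diff_subset) h1
  by_cases he : e ∈ I
  · rw [← ncard_diff_singleton_add_one he hfin]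
    omega
  · rw [show I \ {e} = I from diff_singleton_eq_self he] at h2
    omega

lemma mRk_insert_loop (hl : ¬ M.Indep {e}) (A : Set α) : mRk M (insert e A) = mRk M A := by
  unfold mRk
  congr 1
  ext n
  constructor
  · rintro ⟨I, hI, hIA, rfl⟩
    refine ⟨I, hI, fun x hx => ?_, rfl⟩
    rcases hIA hx with h | h
    · subst h
      exact absurd (hI.subset (singleton_subset_iff.mpr hx)) hl
    · exact h
  · rintro ⟨I, hI, hIA, rfl⟩
    exact ⟨I, hI, hIA.trans (subset_insert _ _), rfl⟩

lemma mRk_insert_coloop (hE : M.E.Finite) (hco : mIsColoop M e) (heA : e ∉ A) :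
    mRk M (insert e A) = mRk M A + 1 := by
  refine le_antisymm (mRk_insert_le hE) ?_
  obtain ⟨I, hI⟩ := M.exists_isBasis' A
  obtain ⟨B, hB, hIB⟩ := hI.indep.exists_isBase_superset
  have heB : e ∈ B := hco B hB
  have heI : e ∉ I := fun h => heA (hI.subset h)
  have hind : M.Indep (insert e I) := hB.indep.subset (insert_subset heB hIB)
  have := indep_ncard_le_mRk hE hind (insert_subset_insert hI.subset)
  rwa [ncard_insert_of_notMem heI (hE.subset hI.indep.subset_ground),
    ← mRk_eq_ncard_of_basis' hE hI] at this

lemma mRk_diff_noncoloop (hE : M.E.Finite) (h : ¬ mIsColoop M e) :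
    mRk M (M.E \ {e}) = mRk M M.E := by
  simp only [mIsColoop, not_forall] at h
  obtain ⟨B, hB, heB⟩ := h
  refine le_antisymm (mRk_mono hE diff_subset) ?_
  rw [base_ncard hE hB]
  exact indep_ncard_le_mRk hE hB.indep (subset_diff_singleton hB.subset_ground heB)

-- appended to part1
lemma base_not_mem_of_loop (hl : ¬ M.Indep {e}) (hB : M.IsBase B) : e ∉ B :=
  fun h => hl (hB.indep.subset (singleton_subset_iff.mpr h))

lemma dual_coloop_of_loop (heE : e ∈ M.E) (hl : ¬ M.Indep {e}) : mIsColoop M✶ e := by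
  intro B hB
  by_contra heB
  have hbase : M.IsBase (M.E \ B) := hB.compl_isBase_of_dual
  exact hl (hbase.indep.subset (singleton_subset_iff.mpr ⟨heE, heB⟩))

lemma dual_not_coloop_of_nonloop (he : M.Indep {e}) : ¬ mIsColoop M✶ e := by
  obtain ⟨B, hB, heB⟩ := he.exists_isBase_superset
  intro h
  have := h (M.E \ B) hB.compl_isBase_dual
  exact this.2 (heB rfl)

/-- A basis' of `M.E \ {e}` is a base, or inserting `e` makes it a base. -/
lemma basis'_diff_singleton_ground (hD : M.IsBasis' D (M.E \ {e})) :
    M.IsBase D ∨ M.IsBase (insert e D) := by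
  obtain ⟨B₀, hB₀, hDB₀⟩ := hD.indep.exists_isBase_superset
  have heD : e ∉ D := fun h => (hD.subset h).2 rfl
  have hsub : D ⊆ B₀ \ {e} := subset_diff_singleton hDB₀ heD
  have hDeq : D = B₀ \ {e} := hD.eq_of_subset_indep (hB₀.indep.subset diff_subset) hsub
    (diff_subset_diff_left hB₀.subset_ground)
  by_cases heB₀ : e ∈ B₀
  · right
    rw [hDeq, insert_diff_singleton, insert_eq_of_mem heB₀]
    exact hB₀
  · left
    rwa [hDeq, diff_singleton_eq_self heB₀]

/-- If `e` is not a coloop, any basis' of `M.E \ {e}` is a base. -/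
lemma basis'_base_of_noncoloop (hE : M.E.Finite) (h : ¬ mIsColoop M e)
    (hD : M.IsBasis' D (M.E \ {e})) : M.IsBase D := by
  rcases basis'_diff_singleton_ground hD with h1 | h1
  · exact h1
  exfalso
  simp only [mIsColoop, not_forall] at h
  obtain ⟨B₁, hB₁, heB₁⟩ := h
  have heD : e ∉ D := fun h => (hD.subset h).2 rfl
  have hc1 : B₁.ncard = D.ncard + 1 := by
    rw [hB₁.ncard_eq_ncard_of_isBase h1, ncard_insert_of_notMem heD
      (hE.subset hD.indep.subset_ground)]
  have hc2 : B₁.ncard ≤ D.ncard := by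
    rw [← mRk_eq_ncard_of_basis' hE hD]
    exact indep_ncard_le_mRk hE hB₁.indep (subset_diff_singleton hB₁.subset_ground heB₁)
  omega

@[simp] lemma mContract_ground : (mContract M {e}).E = M.E \ {e} := rfl

lemma mContract_base_eq (hE : M.E.Finite) (he : M.Indep {e}) :
    (mContract M {e}).IsBase B ↔ e ∉ B ∧ M.IsBase (insert e B) := by
  have heE : e ∈ M.E := he.subset_ground rfl
  have hEd : (M✶).E.Finite := hE
  rw [mContract, mDelete, dual_isBase_iff']
  simp only [restrict_ground_eq, dual_ground, isBase_restrict_iff']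
  constructor
  · rintro ⟨hD, hB⟩
    have hbase : M✶.IsBase ((M.E \ {e}) \ B) :=
      basis'_base_of_noncoloop hEd (dual_not_coloop_of_nonloop he) hD
    have hMbase : M.IsBase (M.E \ ((M.E \ {e}) \ B)) := hbase.compl_isBase_of_dual
    have hset : M.E \ ((M.E \ {e}) \ B) = insert e B := by
      ext x
      have hBx : x ∈ B → x ∈ M.E ∧ x ≠ e := fun h => hB h
      have hxE : x = e → x ∈ M.E := fun h => h ▸ heE
      simp only [mem_diff, mem_singleton_iff, mem_insert_iff]
      tauto
    rw [hset] at hMbase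
    exact ⟨fun h => (hB h).2 rfl, hMbase⟩
  · rintro ⟨heB, hB⟩
    have hBsub : B ⊆ M.E \ {e} := by
      refine subset_diff_singleton ?_ heB
      exact (subset_insert e B).trans hB.subset_ground
    refine ⟨?_, hBsub⟩
    have hset : (M.E \ {e}) \ B = M.E \ insert e B := by
      ext x; simp only [mem_diff, mem_singleton_iff, mem_insert_iff]; tauto
    have hdbase : M✶.IsBase (M.E \ insert e B) := hB.compl_isBase_dual
    rw [hset]
    refine ⟨⟨hdbase.indep, by rw [← hset]; exact diff_subset⟩, ?_⟩
    rintro D' ⟨hD'i, hD'sub⟩ hDD'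
    refine (eq_of_subset_of_ncard_le hDD' ?_ (hE.subset hD'i.subset_ground)).symm.subset
    exact indep_ncard_le_base hEd hD'i hdbase

lemma mContract_base_eq_loop (hE : M.E.Finite) (heE : e ∈ M.E) (hl : ¬ M.Indep {e}) :
    (mContract M {e}).IsBase B ↔ M.IsBase B := by
  have hEd : (M✶).E.Finite := hE
  have hcol : mIsColoop M✶ e := dual_coloop_of_loop heE hl
  rw [mContract, mDelete, dual_isBase_iff']
  simp only [restrict_ground_eq, dual_ground, isBase_restrict_iff']
  constructor
  · rintro ⟨hD, hB⟩
    rcases basis'_diff_singleton_ground hD with h1 | h1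
    · exact absurd (hcol _ h1) (fun h => (hD.subset h).2 rfl)
    have hMbase : M.IsBase (M.E \ insert e ((M.E \ {e}) \ B)) := h1.compl_isBase_of_dual
    have hset : M.E \ insert e ((M.E \ {e}) \ B) = B := by
      ext x
      have hBx : x ∈ B → x ∈ M.E ∧ x ≠ e := fun h => hB h
      simp only [mem_diff, mem_insert_iff, mem_singleton_iff]
      tauto
    rwa [hset] at hMbase
  · intro hB
    have heB : e ∉ B := base_not_mem_of_loop hl hB
    have hBsub : B ⊆ M.E \ {e} := subset_diff_singleton hB.subset_ground heB
    refine ⟨?_, hBsub⟩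
    have hset : (M.E \ {e}) \ B = (M.E \ B) \ {e} := by
      ext x; simp only [mem_diff, mem_singleton_iff]; tauto
    have hdbase : M✶.IsBase (M.E \ B) := hB.compl_isBase_dual
    rw [hset]
    refine ⟨⟨hdbase.indep.subset diff_subset, diff_subset_diff_left diff_subset⟩, ?_⟩
    rintro D' ⟨hD'i, hD'sub⟩ hDD'
    refine (eq_of_subset_of_ncard_le hDD' ?_ (hE.subset hD'i.subset_ground)).symm.subset
    -- extend D' to a dual base B'; e ∈ B'; D' ⊆ B' \ {e}
    obtain ⟨B', hB', hD'B'⟩ := hD'i.exists_isBase_superset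
    have heB' : e ∈ B' := hcol _ hB'
    have heD' : e ∉ D' := fun h => (hD'sub h).2 rfl
    have h1 : D'.ncard ≤ (B' \ {e}).ncard :=
      ncard_le_ncard (subset_diff_singleton hD'B' heD') ((hE.subset hB'.subset_ground).diff)
    have h2 : (B' \ {e}).ncard + 1 = B'.ncard :=
      ncard_diff_singleton_add_one heB' (hE.subset hB'.subset_ground)
    have h3 : B'.ncard = (M.E \ B).ncard := hB'.ncard_eq_ncard_of_isBase hdbase
    have h4 : ((M.E \ B) \ {e}).ncard + 1 = (M.E \ B).ncard :=
      ncard_diff_singleton_add_one ⟨heE, heB⟩ (hE.diff)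
    omega

lemma mContract_indep_iff (hE : M.E.Finite) (he : M.Indep {e}) :
    (mContract M {e}).Indep I ↔ e ∉ I ∧ M.Indep (insert e I) := by
  rw [indep_iff]
  constructor
  · rintro ⟨B, hB, hIB⟩
    rw [mContract_base_eq hE he] at hB
    exact ⟨fun h => hB.1 (hIB h), hB.2.indep.subset (insert_subset_insert hIB)⟩
  · rintro ⟨heI, hind⟩
    obtain ⟨B₀, hB₀, hsub⟩ := hind.exists_isBase_superset
    refine ⟨B₀ \ {e}, ?_, subset_diff_singleton (fun x hx => hsub (Or.inr hx)) heI⟩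
    rw [mContract_base_eq hE he]
    have heB₀ : e ∈ B₀ := hsub (Or.inl rfl)
    exact ⟨fun h => h.2 rfl, by rwa [insert_diff_singleton, insert_eq_of_mem heB₀]⟩

lemma mContract_indep_iff_loop (hE : M.E.Finite) (heE : e ∈ M.E) (hl : ¬ M.Indep {e}) :
    (mContract M {e}).Indep I ↔ M.Indep I ∧ I ⊆ M.E \ {e} := by
  rw [indep_iff]
  constructor
  · rintro ⟨B, hB, hIB⟩
    rw [mContract_base_eq_loop hE heE hl] at hB
    exact ⟨hB.indep.subset hIB, hIB.trans
      (subset_diff_singleton hB.subset_ground (base_not_mem_of_loop hl hB))⟩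
  · rintro ⟨hI, hIsub⟩
    obtain ⟨B, hB, hIB⟩ := hI.exists_isBase_superset
    exact ⟨B, (mContract_base_eq_loop hE heE hl).2 hB, hIB⟩

@[simp] lemma mDelete_ground : (mDelete M D).E = M.E \ D := rfl

lemma mRk_mDelete (hA : A ⊆ M.E \ {e}) : mRk (mDelete M {e}) A = mRk M A := by
  unfold mRk mDelete
  congr 1; ext n
  constructor
  · rintro ⟨I, hI, hIA, rfl⟩
    exact ⟨I, (restrict_indep_iff.1 hI).1, hIA, rfl⟩
  · rintro ⟨I, hI, hIA, rfl⟩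
    exact ⟨I, restrict_indep_iff.2 ⟨hI, hIA.trans hA⟩, hIA, rfl⟩

lemma mRk_mContract_loop (hE : M.E.Finite) (heE : e ∈ M.E) (hl : ¬ M.Indep {e})
    (hA : A ⊆ M.E \ {e}) : mRk (mContract M {e}) A = mRk M A := by
  unfold mRk; congr 1; ext n
  constructor
  · rintro ⟨I, hI, hIA, rfl⟩
    exact ⟨I, ((mContract_indep_iff_loop hE heE hl).1 hI).1, hIA, rfl⟩
  · rintro ⟨I, hI, hIA, rfl⟩
    exact ⟨I, (mContract_indep_iff_loop hE heE hl).2 ⟨hI, hIA.trans hA⟩, hIA, rfl⟩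

lemma mRk_mContract (hE : M.E.Finite) (he : M.Indep {e}) (hA : A ⊆ M.E \ {e}) :
    mRk (mContract M {e}) A + 1 = mRk M (insert e A) := by
  have hE' : (mContract M {e}).E.Finite := by rw [mContract_ground]; exact hE.diff
  obtain ⟨I, hI⟩ := (mContract M {e}).exists_isBasis' A
  have hIc := (mContract_indep_iff hE he).1 hI.indep
  have hfin : I.Finite := hE'.subset hI.indep.subset_ground
  have hle : mRk (mContract M {e}) A + 1 ≤ mRk M (insert e A) := by
    rw [mRk_eq_ncard_of_basis' hE' hI, ← ncard_insert_of_notMem hIc.1 hfin]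
    exact indep_ncard_le_mRk hE hIc.2 (insert_subset_insert hI.subset)
  obtain ⟨J, hJ, heJ⟩ := he.subset_isBasis'_of_subset
    (singleton_subset_iff.2 (Or.inl rfl) : {e} ⊆ insert e A)
  have heJ' : e ∈ J := heJ rfl
  have hJfin : J.Finite := hE.subset hJ.indep.subset_ground
  have hNind : (mContract M {e}).Indep (J \ {e}) := by
    rw [mContract_indep_iff hE he]
    refine ⟨fun h => h.2 rfl, ?_⟩
    rw [insert_diff_singleton, insert_eq_of_mem heJ']
    exact hJ.indep
  have hgoal : mRk M (insert e A) ≤ mRk (mContract M {e}) A + 1 := by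
    rw [mRk_eq_ncard_of_basis' hE hJ, ← ncard_diff_singleton_add_one heJ' hJfin]
    have hsub : J \ {e} ⊆ A := by
      intro x hx
      rcases hJ.subset hx.1 with h | h
      · exact absurd h hx.2
      · exact h
    have := indep_ncard_le_mRk hE' hNind hsub
    omega
  omega

/-- The Tutte polynomial `T_M(x,y) = Σ_{A ⊆ E} (x-1)^(r(E)-r(A)) (y-1)^(|A|-r(A))`. -/
noncomputable def mTutte {R : Type*} [CommRing R] (M : Matroid α) (x y : R) : R :=
  letI := Classical.propDecidable M.E.Finite
  if hE : M.E.Finite then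
    ∑ A ∈ hE.toFinset.powerset,
      (x - 1) ^ (mRk M M.E - mRk M (A : Set α)) * (y - 1) ^ (A.card - mRk M (A : Set α))
  else 0


lemma mTutte_eq {R : Type*} [CommRing R] (M : Matroid α) (s : Finset α) (hs : (↑s : Set α) = M.E)
    (x y : R) :
    mTutte M x y = ∑ A ∈ s.powerset,
      (x - 1) ^ (mRk M M.E - mRk M (A : Set α)) * (y - 1) ^ (A.card - mRk M (A : Set α)) := by
  have hE : M.E.Finite := hs ▸ s.finite_toSet
  rw [mTutte]
  split
  · next h =>
    have hts : h.toFinset = s := by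
      apply Finset.coe_injective
      rw [Set.Finite.coe_toFinset, hs]
    rw [hts]
  · next h => exact absurd hE h

lemma mTutte_loop {K : Type*} [CommRing K] {M : Matroid α} {e : α} (hE : M.E.Finite)
    (heE : e ∈ M.E) (hl : ¬ M.Indep {e}) (X Y : K) :
    mTutte M X Y = Y * mTutte (mContract M {e}) X Y := by
  classical
  have hE' : (M.E \ {e}).Finite := hE.diff
  set s' := hE'.toFinset with hs'def
  have hcs' : (↑s' : Set α) = M.E \ {e} := hE'.coe_toFinset
  have hes' : e ∉ s' := by simp [hs'def]
  have hEins : insert e (M.E \ {e}) = M.E := by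
    rw [insert_diff_singleton, insert_eq_of_mem heE]
  have hcoe : (↑(insert e s') : Set α) = M.E := by
    rw [Finset.coe_insert, hcs', hEins]
  have hrE : mRk M M.E = mRk M (M.E \ {e}) := by
    conv_lhs => rw [← hEins]
    exact mRk_insert_loop hl _
  rw [mTutte_eq M (insert e s') hcoe X Y,
      mTutte_eq (mContract M {e}) s' (by rw [mContract_ground]; exact hcs') X Y,
      Finset.sum_powerset_insert hes', Finset.mul_sum, ← Finset.sum_add_distrib]
  refine Finset.sum_congr rfl fun A hA => ?_
  have hAsub : (↑A : Set α) ⊆ M.E \ {e} := by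
    rw [← hcs']; exact_mod_cast Finset.mem_powerset.1 hA
  have heA : e ∉ A := fun h => hes' (Finset.mem_powerset.1 hA h)
  have hcardins : (insert e A).card = A.card + 1 := Finset.card_insert_of_notMem heA
  have hcoeins : (↑(insert e A) : Set α) = insert e (↑A : Set α) := Finset.coe_insert e A
  have hrins : mRk M (insert e (↑A : Set α)) = mRk M ↑A := mRk_insert_loop hl _
  have hrN : mRk (mContract M {e}) ↑A = mRk M ↑A := mRk_mContract_loop hE heE hl hAsub
  have hrNE : mRk (mContract M {e}) (mContract M {e}).E = mRk M M.E := by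
    rw [mContract_ground, mRk_mContract_loop hE heE hl subset_rfl, hrE]
  have hle : mRk M (↑A : Set α) ≤ A.card := by
    have := mRk_le_ncard (M := M) hE A.finite_toSet
    rwa [ncard_coe_finset] at this
  rw [hcoeins, hrins, hcardins, hrN, hrNE]
  have h1 : A.card + 1 - mRk M ↑A = (A.card - mRk M ↑A) + 1 := by omega
  rw [h1, pow_succ]
  ring

lemma mTutte_coloop {K : Type*} [CommRing K] {M : Matroid α} {e : α} (hE : M.E.Finite)
    (heE : e ∈ M.E) (hco : mIsColoop M e) (X Y : K) :
    mTutte M X Y = X * mTutte (mDelete M {e}) X Y := by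
  classical
  have hE' : (M.E \ {e}).Finite := hE.diff
  set s' := hE'.toFinset with hs'def
  have hcs' : (↑s' : Set α) = M.E \ {e} := hE'.coe_toFinset
  have hes' : e ∉ s' := by simp [hs'def]
  have hEins : insert e (M.E \ {e}) = M.E := by
    rw [insert_diff_singleton, insert_eq_of_mem heE]
  have hcoe : (↑(insert e s') : Set α) = M.E := by
    rw [Finset.coe_insert, hcs', hEins]
  have hrE : mRk M M.E = mRk M (M.E \ {e}) + 1 := by
    conv_lhs => rw [← hEins]
    exact mRk_insert_coloop hE hco (fun h => h.2 rfl)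
  rw [mTutte_eq M (insert e s') hcoe X Y,
      mTutte_eq (mDelete M {e}) s' (by rw [mDelete_ground]; exact hcs') X Y,
      Finset.sum_powerset_insert hes', Finset.mul_sum, ← Finset.sum_add_distrib]
  refine Finset.sum_congr rfl fun A hA => ?_
  have hAsub : (↑A : Set α) ⊆ M.E \ {e} := by
    rw [← hcs']; exact_mod_cast Finset.mem_powerset.1 hA
  have heA : e ∉ A := fun h => hes' (Finset.mem_powerset.1 hA h)
  have heA' : e ∉ (↑A : Set α) := heA
  have hcardins : (insert e A).card = A.card + 1 := Finset.card_insert_of_notMem heA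
  have hcoeins : (↑(insert e A) : Set α) = insert e (↑A : Set α) := Finset.coe_insert e A
  have hrins : mRk M (insert e (↑A : Set α)) = mRk M ↑A + 1 := mRk_insert_coloop hE hco heA'
  have hrN : mRk (mDelete M {e}) ↑A = mRk M ↑A := mRk_mDelete hAsub
  have hrNE : mRk (mDelete M {e}) (mDelete M {e}).E = mRk M (M.E \ {e}) := by
    rw [mDelete_ground, mRk_mDelete subset_rfl]
  have hle : mRk M (↑A : Set α) ≤ mRk M (M.E \ {e}) := mRk_mono hE hAsub
  rw [hcoeins, hrins, hcardins, hrN, hrNE, hrE]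
  have h1 : mRk M (M.E \ {e}) + 1 - mRk M ↑A = (mRk M (M.E \ {e}) - mRk M ↑A) + 1 := by omega
  have h2 : mRk M (M.E \ {e}) + 1 - (mRk M ↑A + 1) = mRk M (M.E \ {e}) - mRk M ↑A := by omega
  have h3 : A.card + 1 - (mRk M ↑A + 1) = A.card - mRk M ↑A := by omega
  rw [h1, h2, h3, pow_succ]
  ring

lemma mTutte_reg {K : Type*} [CommRing K] {M : Matroid α} {e : α} (hE : M.E.Finite)
    (he : M.Indep {e}) (hnc : ¬ mIsColoop M e) (X Y : K) :
    mTutte M X Y = mTutte (mDelete M {e}) X Y + mTutte (mContract M {e}) X Y := by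
  classical
  have heE : e ∈ M.E := he.subset_ground rfl
  have hE' : (M.E \ {e}).Finite := hE.diff
  set s' := hE'.toFinset with hs'def
  have hcs' : (↑s' : Set α) = M.E \ {e} := hE'.coe_toFinset
  have hes' : e ∉ s' := by simp [hs'def]
  have hEins : insert e (M.E \ {e}) = M.E := by
    rw [insert_diff_singleton, insert_eq_of_mem heE]
  have hcoe : (↑(insert e s') : Set α) = M.E := by
    rw [Finset.coe_insert, hcs', hEins]
  have hrE : mRk M M.E = mRk M (M.E \ {e}) := (mRk_diff_noncoloop hE hnc).symm
  rw [mTutte_eq M (insert e s') hcoe X Y,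
      mTutte_eq (mDelete M {e}) s' (by rw [mDelete_ground]; exact hcs') X Y,
      mTutte_eq (mContract M {e}) s' (by rw [mContract_ground]; exact hcs') X Y,
      Finset.sum_powerset_insert hes']
  congr 1
  · refine Finset.sum_congr rfl fun A hA => ?_
    have hAsub : (↑A : Set α) ⊆ M.E \ {e} := by
      rw [← hcs']; exact_mod_cast Finset.mem_powerset.1 hA
    have hrN : mRk (mDelete M {e}) ↑A = mRk M ↑A := mRk_mDelete hAsub
    have hrNE : mRk (mDelete M {e}) (mDelete M {e}).E = mRk M M.E := by
      rw [mDelete_ground, mRk_mDelete subset_rfl, hrE]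
    rw [hrN, hrNE]
  · refine Finset.sum_congr rfl fun A hA => ?_
    have hAsub : (↑A : Set α) ⊆ M.E \ {e} := by
      rw [← hcs']; exact_mod_cast Finset.mem_powerset.1 hA
    have heA : e ∉ A := fun h => hes' (Finset.mem_powerset.1 hA h)
    have hcardins : (insert e A).card = A.card + 1 := Finset.card_insert_of_notMem heA
    have hcoeins : (↑(insert e A) : Set α) = insert e (↑A : Set α) := Finset.coe_insert e A
    have hrC : mRk (mContract M {e}) ↑A + 1 = mRk M (insert e (↑A : Set α)) :=
      mRk_mContract hE he hAsub
    have hrCE : mRk (mContract M {e}) (mContract M {e}).E + 1 = mRk M M.E := by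
      rw [mContract_ground, mRk_mContract hE he subset_rfl, hEins]
    rw [hcoeins, hcardins, ← hrC, ← hrCE]
    have h2 : mRk (mContract M {e}) (mContract M {e}).E + 1 - (mRk (mContract M {e}) ↑A + 1)
        = mRk (mContract M {e}) (mContract M {e}).E - mRk (mContract M {e}) ↑A := by omega
    have h3 : A.card + 1 - (mRk (mContract M {e}) ↑A + 1)
        = A.card - mRk (mContract M {e}) ↑A := by omega
    rw [h2, h3]

/-- the recipe theorem. Any matroid invariant `Q` that is multiplicative over
direct sums (with value `1` on the empty matroid) and satisfies the given coloop, loop and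
deletion/contraction rules is an evaluation of the Tutte polynomial:
`Q_M = a^{n(M)} b^{r(M)} T_M(x/b, y/a)`. -/
theorem recipe {K : Type*} [Field K] (x y a b : K) (ha : a ≠ 0) (hb : b ≠ 0)
    (Q : Matroid α → K)
    (hmul : ∀ (M N : Matroid α) (h : Disjoint M.E N.E),
      Q (M.disjointSum N h) = Q M * Q N)
    (hone : Q (Matroid.emptyOn α) = 1)
    (hcoloop : ∀ (M : Matroid α) (e : α), e ∈ M.E → mIsColoop M e →
      Q M = x * Q (mDelete M {e}))
    (hloop : ∀ (M : Matroid α) (e : α), mIsLoop M e →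
      Q M = y * Q (mContract M {e}))
    (hreg : ∀ (M : Matroid α) (e : α), e ∈ M.E → ¬ mIsLoop M e → ¬ mIsColoop M e →
      Q M = a * Q (mDelete M {e}) + b * Q (mContract M {e}))
    (M : Matroid α) (hE : M.E.Finite) :
    Q M = a ^ mNullity M * b ^ mRank M * mTutte M (x / b) (y / a) := by
  clear hmul
  suffices H : ∀ (n : ℕ) (M : Matroid α), M.E.Finite → M.E.ncard = n →
      Q M = a ^ mNullity M * b ^ mRank M * mTutte M (x / b) (y / a) by
    exact H M.E.ncard M hE rfl
  clear hE M
  intro n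
  induction n using Nat.strong_induction_on with
  | _ n IH =>
  intro M hE hn
  rcases M.E.eq_empty_or_nonempty with h0 | ⟨e, heE⟩
  · -- base case : empty matroid
    have hM : M = emptyOn α := ground_eq_empty_iff.1 h0
    have hrkE0 : mRk M (∅ : Set α) = 0 := by
      have h1 := mRk_le_ncard (M := M) (A := ∅) hE finite_empty
      rw [ncard_empty] at h1
      omega
    have hrk0 : mRk M M.E = 0 := by rw [h0]; exact hrkE0
    have hT : mTutte M (x / b) (y / a) = 1 := by
      rw [mTutte_eq M ∅ (by simp [h0]) (x / b) (y / a)]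
      simp [hrk0, hrkE0]
    have hrank : mRank M = 0 := hrk0
    have hnul : mNullity M = 0 := by
      show M.E.ncard - mRank M = 0
      rw [hrank, h0, ncard_empty]
    have hQ : Q M = 1 := by rw [hM]; exact hone
    rw [hQ, hT, hrank, hnul]
    simp
  · -- inductive step
    have hE' : (M.E \ {e}).Finite := hE.diff
    have hcard : (M.E \ {e}).ncard + 1 = M.E.ncard := ncard_diff_singleton_add_one heE hE
    have hEins : insert e (M.E \ {e}) = M.E := by
      rw [insert_diff_singleton, insert_eq_of_mem heE]
    have hrankM : mRank M = mRk M M.E := rfl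
    have hnulM : mNullity M = M.E.ncard - mRank M := rfl
    by_cases hl : M.Indep {e}
    · by_cases hco : mIsColoop M e
      · -- coloop case
        set N := mDelete M {e} with hNdef
        have hNfin : N.E.Finite := hE'
        have hQN := IH (N.E.ncard) (by show (M.E \ {e}).ncard < n; omega) N hNfin rfl
        have hrEq : mRk M M.E = mRk M (M.E \ {e}) + 1 := by
          conv_lhs => rw [← hEins]
          exact mRk_insert_coloop hE hco (fun h => h.2 rfl)
        have hrN : mRank N = mRk M (M.E \ {e}) := by
          show mRk (mDelete M {e}) (M.E \ {e}) = _
          rw [mRk_mDelete subset_rfl]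
        have hnN : mNullity N = mNullity M := by
          show (M.E \ {e}).ncard - mRank N = M.E.ncard - mRank M
          rw [hrN, hrankM, hrEq]
          omega
        rw [hcoloop M e heE hco, hQN, mTutte_coloop hE heE hco (x / b) (y / a), hnN,
          hrankM, hrEq, hrN]
        generalize mTutte (mDelete M {e}) (x / b) (y / a) = T
        rw [pow_succ]
        field_simp
      · -- regular case
        have hnloop : ¬ mIsLoop M e := fun h => h.2 hl
        set N1 := mDelete M {e} with hN1def
        set N2 := mContract M {e} with hN2def
        have hN1fin : N1.E.Finite := hE'
        have hN2fin : N2.E.Finite := hE'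
        have hQ1 := IH (N1.E.ncard) (by show (M.E \ {e}).ncard < n; omega) N1 hN1fin rfl
        have hQ2 := IH (N2.E.ncard) (by show (M.E \ {e}).ncard < n; omega) N2 hN2fin rfl
        have hrEq : mRk M M.E = mRk M (M.E \ {e}) := (mRk_diff_noncoloop hE hco).symm
        have hr1 : mRank N1 = mRk M M.E := by
          show mRk (mDelete M {e}) (M.E \ {e}) = _
          rw [mRk_mDelete subset_rfl, hrEq]
        have hr2 : mRank N2 + 1 = mRk M M.E := by
          show mRk (mContract M {e}) (M.E \ {e}) + 1 = _
          rw [mRk_mContract hE hl subset_rfl, hEins]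
        have hrle : mRk M M.E ≤ (M.E \ {e}).ncard := by
          rw [hrEq]; exact mRk_le_ncard hE hE'
        have hn1 : mNullity N1 + 1 = mNullity M := by
          show (M.E \ {e}).ncard - mRank N1 + 1 = M.E.ncard - mRank M
          rw [hr1, hrankM]
          omega
        have hn2 : mNullity N2 = mNullity M := by
          show (M.E \ {e}).ncard - mRank N2 = M.E.ncard - mRank M
          rw [hrankM]
          omega
        have hr2' : mRank M = mRank N2 + 1 := by rw [hrankM, ← hr2]
        have hr1' : mRank N1 = mRank N2 + 1 := by rw [hr1, ← hr2]
        have hn2' : mNullity N2 = mNullity N1 + 1 := by omega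
        rw [hreg M e heE hnloop hco, hQ1, hQ2, mTutte_reg hE hl hco (x / b) (y / a),
          show mNullity M = mNullity N1 + 1 from hn1.symm, hr2', hr1', hn2']
        generalize mTutte (mDelete M {e}) (x / b) (y / a) = T1
        generalize mTutte (mContract M {e}) (x / b) (y / a) = T2
        simp only [pow_succ]
        ring
    · -- loop case
      set N := mContract M {e} with hNdef
      have hNfin : N.E.Finite := hE'
      have hQN := IH (N.E.ncard) (by show (M.E \ {e}).ncard < n; omega) N hNfin rfl
      have hrEq : mRk M M.E = mRk M (M.E \ {e}) := by
        conv_lhs => rw [← hEins]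
        exact mRk_insert_loop hl _
      have hrN : mRank N = mRk M M.E := by
        show mRk (mContract M {e}) (M.E \ {e}) = _
        rw [mRk_mContract_loop hE heE hl subset_rfl, hrEq]
      have hrle : mRk M M.E ≤ (M.E \ {e}).ncard := by
        rw [hrEq]; exact mRk_le_ncard hE hE'
      have hnN : mNullity N + 1 = mNullity M := by
        show (M.E \ {e}).ncard - mRank N + 1 = M.E.ncard - mRank M
        rw [hrN, hrankM]
        omega
      rw [hloop M e ⟨heE, hl⟩, hQN, mTutte_loop hE heE hl (x / b) (y / a), ← hnN,
        hrankM, ← hrN]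
      generalize mTutte (mContract M {e}) (x / b) (y / a) = T
      rw [pow_succ]
      field_simp
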